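/- Let A, B, X be self-adjoint bounded operators on H with A + B positive and invertible. Then the block operator [[A, X],[X, B]] on H ⊕ H is positive if and only if ‖(B+A)^{-1/2}(B − A + 2iX)(B+A)^{-1/2}‖ ≤ 1. -/

import Mathlib

open ContinuousLinearMap
open scoped ComplexInnerProductSpace

set_option linter.unusedSectionVars false

variable {H : Type*} [NormedAddCommGroup H] [InnerProductSpace ℂ H] [CompleteSpace H]

/-- The 2×2 block operator `[[A, X],[Y, B]]` acting on the Hilbert space `H ⊕ H`
(realized as `WithLp 2 (H × H)`). -/
noncomputable def blockOperator (A X Y B : H →L[ℂ] H) :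
    WithLp 2 (H × H) →L[ℂ] WithLp 2 (H × H) :=
  (WithLp.prodContinuousLinearEquiv 2 ℂ H H).symm.toContinuousLinearMap ∘L
    ((A ∘L ContinuousLinearMap.fst ℂ H H + X ∘L ContinuousLinearMap.snd ℂ H H).prod
      (Y ∘L ContinuousLinearMap.fst ℂ H H + B ∘L ContinuousLinearMap.snd ℂ H H)) ∘L
    (WithLp.prodContinuousLinearEquiv 2 ℂ H H).toContinuousLinearMap

lemma blockOperator_inner' (A X Y B : H →L[ℂ] H) (z w : WithLp 2 (H × H)) :
    (inner ℂ (blockOperator A X Y B z) w : ℂ)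
      = ⟪A z.fst + X z.snd, w.fst⟫ + ⟪Y z.fst + B z.snd, w.snd⟫ := rfl

lemma inner_withLp' (z w : WithLp 2 (H × H)) :
    (inner ℂ z w : ℂ) = ⟪z.fst, w.fst⟫ + ⟪z.snd, w.snd⟫ := rfl

lemma norm_le_one_iff_forall' (D : H →L[ℂ] H) :
    ‖D‖ ≤ 1 ↔ ∀ u v : H, 2 * (⟪D v, u⟫).im ≤ ‖u‖ ^ 2 + ‖v‖ ^ 2 := by
  constructor
  · intro h u v
    have h1 : (⟪D v, u⟫).im ≤ ‖D v‖ * ‖u‖ := by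
      calc (⟪D v, u⟫).im ≤ ‖(⟪D v, u⟫ : ℂ)‖ := Complex.im_le_norm _
        _ = ‖(⟪D v, u⟫ : ℂ)‖ := rfl
        _ ≤ ‖D v‖ * ‖u‖ := norm_inner_le_norm _ _
    have h2 : ‖D v‖ ≤ ‖v‖ := by
      calc ‖D v‖ ≤ ‖D‖ * ‖v‖ := D.le_opNorm v
        _ ≤ 1 * ‖v‖ := by nlinarith [norm_nonneg v]
        _ = ‖v‖ := one_mul _
    nlinarith [norm_nonneg u, norm_nonneg v, sq_nonneg (‖u‖ - ‖v‖)]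
  · intro h
    refine D.opNorm_le_bound zero_le_one fun v => ?_
    rw [one_mul]
    by_cases hDv : D v = 0
    · simp [hDv, norm_nonneg]
    have hDvpos : 0 < ‖D v‖ := norm_pos_iff.mpr hDv
    have hv : v ≠ 0 := fun hv0 => hDv (by simp [hv0])
    have hvpos : 0 < ‖v‖ := norm_pos_iff.mpr hv
    set t : ℝ := ‖v‖ / ‖D v‖ with ht
    have htpos : 0 < t := div_pos hvpos hDvpos
    have := h (((t : ℂ) * Complex.I) • D v) v
    have hinner : ⟪D v, ((t : ℂ) * Complex.I) • D v⟫ = ((t * ‖D v‖ ^ 2 : ℝ) : ℂ) * Complex.I := by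
      rw [inner_smul_right, inner_self_eq_norm_sq_to_K]
      push_cast
      exact mul_right_comm _ _ _
    have him : (⟪D v, ((t : ℂ) * Complex.I) • D v⟫).im = t * ‖D v‖ ^ 2 := by
      rw [hinner, Complex.mul_I_im, Complex.ofReal_re]
    have hnorm : ‖(((t : ℂ) * Complex.I) • D v)‖ = t * ‖D v‖ := by
      rw [norm_smul, norm_mul, Complex.norm_I, mul_one, Complex.norm_real,
        Real.norm_eq_abs, abs_of_pos htpos]
    rw [him, hnorm] at this
    have hts : t * ‖D v‖ = ‖v‖ := by rw [ht]; field_simp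
    nlinarith

lemma key_identity' (A B X S R : H →L[ℂ] H)
    (hA : IsSelfAdjoint A) (hB : IsSelfAdjoint B) (hX : IsSelfAdjoint X)
    (hS : IsSelfAdjoint S) (hS2 : S ∘L S = B + A)
    (hR₁ : S ∘L R = 1) (hRsa : IsSelfAdjoint R) (u v : H) :
    (⟪A (R u + Complex.I • R v) + X (Complex.I • R u + R v), R u + Complex.I • R v⟫
      + ⟪X (R u + Complex.I • R v) + B (Complex.I • R u + R v), Complex.I • R u + R v⟫).re
    = ‖u‖ ^ 2 + ‖v‖ ^ 2
      - 2 * (⟪(R ∘L (B - A + (2 * Complex.I) • X) ∘L R) v, u⟫).im := by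
  have symA : ∀ p q : H, ⟪A p, q⟫ = ⟪p, A q⟫ := fun p q =>
    (ContinuousLinearMap.isSelfAdjoint_iff_isSymmetric).mp hA p q
  have symB : ∀ p q : H, ⟪B p, q⟫ = ⟪p, B q⟫ := fun p q =>
    (ContinuousLinearMap.isSelfAdjoint_iff_isSymmetric).mp hB p q
  have symX : ∀ p q : H, ⟪X p, q⟫ = ⟪p, X q⟫ := fun p q =>
    (ContinuousLinearMap.isSelfAdjoint_iff_isSymmetric).mp hX p q
  have symS : ∀ p q : H, ⟪S p, q⟫ = ⟪p, S q⟫ := fun p q =>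
    (ContinuousLinearMap.isSelfAdjoint_iff_isSymmetric).mp hS p q
  have symR : ∀ p q : H, ⟪R p, q⟫ = ⟪p, R q⟫ := fun p q =>
    (ContinuousLinearMap.isSelfAdjoint_iff_isSymmetric).mp hRsa p q
  set a := R u with ha
  set b := R v with hb
  have hSa : S a = u := by rw [ha, ← ContinuousLinearMap.comp_apply, hR₁]; rfl
  have hSb : S b = v := by rw [hb, ← ContinuousLinearMap.comp_apply, hR₁]; rfl
  have hda : ⟪A a, a⟫ + ⟪B a, a⟫ = ((‖u‖ ^ 2 : ℝ) : ℂ) := by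
    have h1 : ⟪A a, a⟫ + ⟪B a, a⟫ = ⟪(S ∘L S) a, a⟫ := by
      rw [hS2]; simp [inner_add_left]; ring
    rw [h1, ContinuousLinearMap.comp_apply, symS, hSa]
    rw [inner_self_eq_norm_sq_to_K]
    push_cast
    rfl
  have hdb : ⟪A b, b⟫ + ⟪B b, b⟫ = ((‖v‖ ^ 2 : ℝ) : ℂ) := by
    have h1 : ⟪A b, b⟫ + ⟪B b, b⟫ = ⟪(S ∘L S) b, b⟫ := by
      rw [hS2]; simp [inner_add_left]; ring
    rw [h1, ContinuousLinearMap.comp_apply, symS, hSb]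
    rw [inner_self_eq_norm_sq_to_K]
    push_cast
    rfl
  have hXab : ⟪X a, b⟫ = (starRingEnd ℂ) ⟪X b, a⟫ := by rw [symX, inner_conj_symm]
  have hAab : ⟪A a, b⟫ = (starRingEnd ℂ) ⟪A b, a⟫ := by rw [symA, inner_conj_symm]
  have hBab : ⟪B a, b⟫ = (starRingEnd ℂ) ⟪B b, a⟫ := by rw [symB, inner_conj_symm]
  have hD : ⟪(R ∘L (B - A + (2 * Complex.I) • X) ∘L R) v, u⟫
      = (⟪B b, a⟫ - ⟪A b, a⟫) - (2 * Complex.I) * ⟪X b, a⟫ := by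
    simp only [ContinuousLinearMap.comp_apply, ← hb]
    rw [symR, ← ha]
    simp [inner_add_left, inner_smul_left, inner_sub_left, Complex.conj_I, map_ofNat]
    ring
  have hE : ⟪A (a + Complex.I • b) + X (Complex.I • a + b), a + Complex.I • b⟫
      + ⟪X (a + Complex.I • b) + B (Complex.I • a + b), Complex.I • a + b⟫
      = (((‖u‖ ^ 2 : ℝ) : ℂ) + ((‖v‖ ^ 2 : ℝ) : ℂ))
        + (2 * ⟪X b, a⟫ + 2 * (starRingEnd ℂ) ⟪X b, a⟫)
        + Complex.I * ((⟪B b, a⟫ - ⟪A b, a⟫)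
            - (starRingEnd ℂ) ⟪B b, a⟫ + (starRingEnd ℂ) ⟪A b, a⟫) := by
    simp only [map_add, map_smul, inner_add_left, inner_add_right, inner_smul_left,
      inner_smul_right, Complex.conj_I, smul_eq_mul]
    rw [hAab, hBab, hXab]
    linear_combination hda + hdb - (inner ℂ (X b) a + inner ℂ (A b) b
      + (starRingEnd ℂ) (inner ℂ (X b) a) + inner ℂ (B a) a) * Complex.I_sq
  have e1 : ⟪a, X b⟫ = (starRingEnd ℂ) ⟪X b, a⟫ := (inner_conj_symm _ _).symm
  have e2 : ⟪a, A b⟫ = (starRingEnd ℂ) ⟪A b, a⟫ := (inner_conj_symm _ _).symm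
  have e3 : ⟪a, B b⟫ = (starRingEnd ℂ) ⟪B b, a⟫ := (inner_conj_symm _ _).symm
  rw [hE, hD]
  simp only [Complex.add_re, Complex.sub_re, Complex.mul_re, Complex.mul_im, Complex.add_im,
    Complex.sub_im, Complex.I_re, Complex.I_im, Complex.conj_re, Complex.conj_im,
    Complex.ofReal_re, Complex.ofReal_im, Complex.re_ofNat, Complex.im_ofNat, e1, e2, e3]
  ring

lemma blockOperator_isSelfAdjoint' (A B X : H →L[ℂ] H)
    (hA : IsSelfAdjoint A) (hB : IsSelfAdjoint B) (hX : IsSelfAdjoint X) :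
    IsSelfAdjoint (blockOperator A X X B) := by
  rw [ContinuousLinearMap.isSelfAdjoint_iff_isSymmetric]
  have symA : ∀ p q : H, ⟪A p, q⟫ = ⟪p, A q⟫ := fun p q =>
    (ContinuousLinearMap.isSelfAdjoint_iff_isSymmetric).mp hA p q
  have symB : ∀ p q : H, ⟪B p, q⟫ = ⟪p, B q⟫ := fun p q =>
    (ContinuousLinearMap.isSelfAdjoint_iff_isSymmetric).mp hB p q
  have symX : ∀ p q : H, ⟪X p, q⟫ = ⟪p, X q⟫ := fun p q =>
    (ContinuousLinearMap.isSelfAdjoint_iff_isSymmetric).mp hX p q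
  intro z w
  show (inner ℂ (blockOperator A X X B z) w : ℂ) = inner ℂ z (blockOperator A X X B w)
  rw [blockOperator_inner']
  have : (inner ℂ z (blockOperator A X X B w) : ℂ)
      = ⟪z.fst, A w.fst + X w.snd⟫ + ⟪z.snd, X w.fst + B w.snd⟫ := rfl
  rw [this]
  simp only [inner_add_left, inner_add_right, symA, symB, symX]
  ring

/-- For self-adjoint `A, B, X` with `A + B` positive and invertible:
`[[A, X],[X, B]] ≥ 0` iff `‖(B+A)^{-1/2} (B − A + 2iX) (B+A)^{-1/2}‖ ≤ 1`,
where `(B+A)^{-1/2}` is the operator `R` inverse to the positive square root `S`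
of `B + A`. -/
theorem blockOperator_isPositive_iff_norm_le_one
    (A B X S R : H →L[ℂ] H)
    (hA : IsSelfAdjoint A) (hB : IsSelfAdjoint B) (hX : IsSelfAdjoint X)
    (hAB : (A + B).IsPositive) (hABinv : ∃ T : H →L[ℂ] H, (A + B) ∘L T = 1 ∧ T ∘L (A + B) = 1)
    (hS : S.IsPositive) (hS2 : S ∘L S = B + A)
    (hR₁ : S ∘L R = 1) (hR₂ : R ∘L S = 1) :
    (blockOperator A X X B).IsPositive ↔
      ‖R ∘L (B - A + (2 * Complex.I) • X) ∘L R‖ ≤ 1 := by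
  have hSsa : IsSelfAdjoint S := hS.isSelfAdjoint
  have hRsa : IsSelfAdjoint R := by
    have h1 : star R * S = 1 := by
      have h := congrArg star hR₁
      rw [show (S ∘L R) = S * R from rfl, star_mul, hSsa.star_eq, star_one] at h
      exact h
    show star R = R
    calc star R = star R * (S * R) := by rw [show S * R = 1 from hR₁, mul_one]
      _ = (star R * S) * R := by rw [mul_assoc]
      _ = R := by rw [h1, one_mul]
  have hMsa := blockOperator_isSelfAdjoint' A B X hA hB hX
  have hre : ∀ z : WithLp 2 (H × H),
      (blockOperator A X X B).reApplyInnerSelf z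
        = (⟪A z.fst + X z.snd, z.fst⟫ + ⟪X z.fst + B z.snd, z.snd⟫).re := by
    intro z
    rw [ContinuousLinearMap.reApplyInnerSelf, blockOperator_inner']
    rfl
  constructor
  · intro hpos
    rw [norm_le_one_iff_forall']
    intro u v
    set z : WithLp 2 (H × H) := (WithLp.prodContinuousLinearEquiv 2 ℂ H H).symm
      (R u + Complex.I • R v, Complex.I • R u + R v) with hz
    have h0 := hpos.2 z
    rw [hre z] at h0
    have hz1 : z.fst = R u + Complex.I • R v := rfl
    have hz2 : z.snd = Complex.I • R u + R v := rfl
    rw [hz1, hz2, key_identity' A B X S R hA hB hX hSsa hS2 hR₁ hRsa u v] at h0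
    linarith
  · intro hnorm
    rw [norm_le_one_iff_forall'] at hnorm
    refine ⟨ContinuousLinearMap.isSelfAdjoint_iff_isSymmetric.mp hMsa, fun z => ?_⟩
    rw [hre z]
    set x := z.fst with hx'
    set y := z.snd with hy'
    set u : H := (1/2 : ℂ) • (S x - Complex.I • S y) with hu
    set v : H := (1/2 : ℂ) • (S y - Complex.I • S x) with hv
    have rSx : R (S x) = x := by rw [← ContinuousLinearMap.comp_apply, hR₂]; rfl
    have rSy : R (S y) = y := by rw [← ContinuousLinearMap.comp_apply, hR₂]; rfl
    have hxe : R u + Complex.I • R v = x := by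
      rw [hu, hv]
      simp only [map_smul, map_sub, rSx, rSy]
      have hI : Complex.I * Complex.I = -1 := Complex.I_mul_I
      match_scalars <;> simp <;> ring_nf <;> norm_num
    have hye : Complex.I • R u + R v = y := by
      rw [hu, hv]
      simp only [map_smul, map_sub, rSx, rSy]
      match_scalars <;> simp <;> ring_nf <;> norm_num
    rw [← hxe, ← hye, key_identity' A B X S R hA hB hX hSsa hS2 hR₁ hRsa u v]
    linarith [hnorm u v]
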